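/- Let U(a, b) be the transport polytope for a ∈ Δ_m, b ∈ Δ_n, let V(D) = min_{P ∈ U(a,b)} ⟨P, D⟩, and let D : ℝ^k → ℝ^{m×n} be a map of network parameters to cost matrices that is Fréchet differentiable at θ₀. If the minimizer P* of ⟨P, D(θ₀)⟩ over U(a,b) is unique, then the composite θ ↦ V(D(θ)) is differentiable at θ₀ with derivative h ↦ ⟨P*, (fderiv D at θ₀)(h)⟩; i.e., the gradient of the EMD loss with respect to the parameters is obtained by treating the optimal flow matrix P* as a constant and applying the chain rule through the cost matrix. -/

import Mathlib

attribute [local instance] Matrix.normedAddCommGroup Matrix.normedSpace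

open Asymptotics Filter

/-- Let `V(D) = min_{P ∈ U(a,b)} ⟨P, D⟩` and let `D : ℝ^k → ℝ^{m×n}` be
Fréchet differentiable at `θ₀`. If the minimizer `P*` of `⟨P, D(θ₀)⟩` over `U(a,b)` is
unique, then `θ ↦ V(D(θ))` is differentiable at `θ₀` with derivative
`h ↦ ⟨P*, (fderiv D θ₀) h⟩`: the gradient of the EMD loss w.r.t. the parameters is obtained
by treating `P*` as a constant and applying the chain rule through the cost matrix. -/
theorem transport_value_chain_rule {m n k : ℕ}
    (a : Fin m → ℝ) (b : Fin n → ℝ)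
    (ha0 : ∀ i, 0 ≤ a i) (hb0 : ∀ j, 0 ≤ b j)
    (ha1 : ∑ i, a i = 1) (hb1 : ∑ j, b j = 1)
    (U : Set (Matrix (Fin m) (Fin n) ℝ))
    (hU : U = {P | (∀ i j, 0 ≤ P i j) ∧ (∀ i, ∑ j, P i j = a i) ∧ (∀ j, ∑ i, P i j = b j)})
    (V : Matrix (Fin m) (Fin n) ℝ → ℝ)
    (hV : ∀ D, V D = sInf ((fun P => ∑ i, ∑ j, P i j * D i j) '' U))
    (D : (Fin k → ℝ) → Matrix (Fin m) (Fin n) ℝ) (θ₀ : Fin k → ℝ)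
    (hD : DifferentiableAt ℝ D θ₀)
    (Pstar : Matrix (Fin m) (Fin n) ℝ) (hPstar : Pstar ∈ U)
    (hmin : (∑ i, ∑ j, Pstar i j * D θ₀ i j) = V (D θ₀))
    (huniq : ∀ Q ∈ U, (∑ i, ∑ j, Q i j * D θ₀ i j) = V (D θ₀) → Q = Pstar) :
    ∃ f : (Fin k → ℝ) →L[ℝ] ℝ,
      (∀ h : Fin k → ℝ, f h = ∑ i, ∑ j, Pstar i j * fderiv ℝ D θ₀ h i j) ∧
      HasFDerivAt (fun θ => V (D θ)) f θ₀ := by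
  classical
  -- the bilinear pairing
  set g : Matrix (Fin m) (Fin n) ℝ → Matrix (Fin m) (Fin n) ℝ → ℝ :=
    fun P E => ∑ i, ∑ j, P i j * E i j with hgdef
  -- bilinearity facts
  have hsub1 : ∀ P E₁ E₂, g P (E₁ - E₂) = g P E₁ - g P E₂ := by
    intro P E₁ E₂
    simp [hgdef, Matrix.sub_apply, mul_sub, Finset.sum_sub_distrib]
  have hsub2 : ∀ P₁ P₂ E, g (P₁ - P₂) E = g P₁ E - g P₂ E := by
    intro P₁ P₂ E
    simp [hgdef, Matrix.sub_apply, sub_mul, Finset.sum_sub_distrib]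
  -- bound for the pairing
  set C : ℝ := (m * n : ℕ) + 1 with hCdef
  have hCpos : 0 < C := by positivity
  have hgbound : ∀ P E : Matrix (Fin m) (Fin n) ℝ, |g P E| ≤ C * ‖P‖ * ‖E‖ := by
    intro P E
    have h1 : |g P E| ≤ ∑ i, ∑ j, |P i j * E i j| := by
      refine (Finset.abs_sum_le_sum_abs _ _).trans ?_
      exact Finset.sum_le_sum fun i _ => Finset.abs_sum_le_sum_abs _ _
    have h2 : ∑ i, ∑ j, |P i j * E i j| ≤ ∑ i : Fin m, ∑ j : Fin n, ‖P‖ * ‖E‖ := by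
      refine Finset.sum_le_sum fun i _ => Finset.sum_le_sum fun j _ => ?_
      rw [abs_mul]
      exact mul_le_mul (Matrix.norm_entry_le_entrywise_sup_norm P)
        (Matrix.norm_entry_le_entrywise_sup_norm E) (abs_nonneg _) (norm_nonneg _)
    have h3 : (∑ _i : Fin m, ∑ _j : Fin n, ‖P‖ * ‖E‖) = (m * n : ℕ) * (‖P‖ * ‖E‖) := by
      simp [Finset.sum_const, Finset.card_univ]
      ring
    have h4 : ((m * n : ℕ) : ℝ) * (‖P‖ * ‖E‖) ≤ C * ‖P‖ * ‖E‖ := by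
      rw [hCdef]
      have : (0:ℝ) ≤ ‖P‖ * ‖E‖ := by positivity
      nlinarith [this]
    calc |g P E| ≤ ∑ i, ∑ j, |P i j * E i j| := h1
      _ ≤ ∑ _i : Fin m, ∑ _j : Fin n, ‖P‖ * ‖E‖ := h2
      _ = (m * n : ℕ) * (‖P‖ * ‖E‖) := h3
      _ ≤ C * ‖P‖ * ‖E‖ := h4
  -- U is nonempty, bounded, closed, compact
  have hUne : U.Nonempty := ⟨Pstar, hPstar⟩
  have hUb : ∀ P ∈ U, ‖P‖ ≤ 1 := by
    intro P hP
    rw [hU] at hP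
    obtain ⟨hP0, hPa, hPb⟩ := hP
    refine (Matrix.norm_le_iff zero_le_one).2 fun i j => ?_
    rw [Real.norm_eq_abs, abs_of_nonneg (hP0 i j)]
    calc P i j ≤ ∑ j', P i j' :=
          Finset.single_le_sum (fun j' _ => hP0 i j') (Finset.mem_univ j)
      _ = a i := hPa i
      _ ≤ ∑ i', a i' := Finset.single_le_sum (fun i' _ => ha0 i') (Finset.mem_univ i)
      _ = 1 := ha1
  have hentry : ∀ (i : Fin m) (j : Fin n),
      Continuous fun P : Matrix (Fin m) (Fin n) ℝ => P i j := fun i j =>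
    (continuous_apply j).comp (continuous_apply i)
  have hUcl : IsClosed U := by
    rw [hU]
    have e1 : IsClosed {P : Matrix (Fin m) (Fin n) ℝ | ∀ i j, 0 ≤ P i j} := by
      have : {P : Matrix (Fin m) (Fin n) ℝ | ∀ i j, 0 ≤ P i j}
          = ⋂ i, ⋂ j, {P | 0 ≤ P i j} := by ext P; simp
      rw [this]
      exact isClosed_iInter fun i => isClosed_iInter fun j =>
        isClosed_le continuous_const (hentry i j)
    have e2 : IsClosed {P : Matrix (Fin m) (Fin n) ℝ | ∀ i, ∑ j, P i j = a i} := by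
      have : {P : Matrix (Fin m) (Fin n) ℝ | ∀ i, ∑ j, P i j = a i}
          = ⋂ i, {P | ∑ j, P i j = a i} := by ext P; simp
      rw [this]
      exact isClosed_iInter fun i =>
        isClosed_eq (continuous_finset_sum _ fun j _ => hentry i j) continuous_const
    have e3 : IsClosed {P : Matrix (Fin m) (Fin n) ℝ | ∀ j, ∑ i, P i j = b j} := by
      have : {P : Matrix (Fin m) (Fin n) ℝ | ∀ j, ∑ i, P i j = b j}
          = ⋂ j, {P | ∑ i, P i j = b j} := by ext P; simp
      rw [this]
      exact isClosed_iInter fun j =>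
        isClosed_eq (continuous_finset_sum _ fun i _ => hentry i j) continuous_const
    have : {P : Matrix (Fin m) (Fin n) ℝ |
        (∀ i j, 0 ≤ P i j) ∧ (∀ i, ∑ j, P i j = a i) ∧ (∀ j, ∑ i, P i j = b j)}
        = {P | ∀ i j, 0 ≤ P i j} ∩ ({P | ∀ i, ∑ j, P i j = a i} ∩ {P | ∀ j, ∑ i, P i j = b j}) := by
      ext P; simp [Set.mem_inter_iff, and_assoc]
    rw [this]
    exact e1.inter (e2.inter e3)
  have hUc : IsCompact U :=
    Metric.isCompact_of_isClosed_isBounded hUcl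
      (isBounded_iff_forall_norm_le.2 ⟨1, hUb⟩)
  -- continuity of P ↦ g P E
  have hgcont : ∀ E, Continuous fun P => g P E := by
    intro E
    exact continuous_finset_sum _ fun i _ => continuous_finset_sum _ fun j _ =>
      (hentry i j).mul continuous_const
  -- existence of minimizers and the value identity
  have hexists : ∀ E, ∃ P ∈ U, ∀ Q ∈ U, g P E ≤ g Q E := by
    intro E
    obtain ⟨P, hPU, hPmin⟩ := hUc.exists_isMinOn hUne (hgcont E).continuousOn
    exact ⟨P, hPU, fun Q hQ => hPmin hQ⟩
  have hVeq : ∀ E, ∀ P ∈ U, (∀ Q ∈ U, g P E ≤ g Q E) → V E = g P E := by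
    intro E P hPU hPmin
    rw [hV]
    refine IsLeast.csInf_eq ⟨⟨P, hPU, rfl⟩, ?_⟩
    rintro y ⟨Q, hQ, rfl⟩
    exact hPmin Q hQ
  have hVle : ∀ E, ∀ Q ∈ U, V E ≤ g Q E := by
    intro E Q hQ
    obtain ⟨P, hPU, hPmin⟩ := hexists E
    rw [hVeq E P hPU hPmin]
    exact hPmin Q hQ
  have hV0 : V (D θ₀) = g Pstar (D θ₀) := hmin.symm
  -- a measurable selection of minimizers
  choose Psel hPselU hPselMin using fun θ => hexists (D θ)
  have hVP : ∀ θ, V (D θ) = g (Psel θ) (D θ) := fun θ =>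
    hVeq (D θ) (Psel θ) (hPselU θ) (hPselMin θ)
  -- KEY STABILITY: minimizers for nearby costs are near Pstar
  have key : ∀ ε > (0:ℝ), ∃ δ > (0:ℝ), ∀ E : Matrix (Fin m) (Fin n) ℝ,
      ‖E - D θ₀‖ < δ → ∀ Q ∈ U, (∀ R ∈ U, g Q E ≤ g R E) → ‖Q - Pstar‖ ≤ ε := by
    intro ε hε
    set K : Set (Matrix (Fin m) (Fin n) ℝ) := U ∩ {Q | ε ≤ ‖Q - Pstar‖} with hKdef
    have hKc : IsCompact K :=
      hUc.inter_right (isClosed_le continuous_const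
        ((continuous_id.sub continuous_const).norm))
    by_cases hKne : K.Nonempty
    · obtain ⟨Q₀, hQ₀K, hQ₀min⟩ := hKc.exists_isMinOn hKne (hgcont (D θ₀)).continuousOn
      have hQ₀U : Q₀ ∈ U := hQ₀K.1
      have hQ₀far : ε ≤ ‖Q₀ - Pstar‖ := hQ₀K.2
      have hv₀ : V (D θ₀) < g Q₀ (D θ₀) := by
        rcases lt_or_eq_of_le (hVle (D θ₀) Q₀ hQ₀U) with h | h
        · exact h
        · exfalso
          have : Q₀ = Pstar := huniq Q₀ hQ₀U h.symm
          rw [this, sub_self, norm_zero] at hQ₀far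
          linarith
      set δ : ℝ := (g Q₀ (D θ₀) - V (D θ₀)) / (2 * C) with hδdef
      have hδpos : 0 < δ := by
        apply div_pos (by linarith) (by linarith)
      refine ⟨δ, hδpos, fun E hE Q hQU hQmin => ?_⟩
      -- show Q ∉ K
      by_contra hfar
      push_neg at hfar
      have hQK : Q ∈ K := ⟨hQU, le_of_lt hfar⟩
      have hQnorm : ‖Q‖ ≤ 1 := hUb Q hQU
      have hPsnorm : ‖Pstar‖ ≤ 1 := hUb Pstar hPstar
      have hEb : ‖D θ₀ - E‖ < δ := by rwa [norm_sub_rev]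
      have b1 : g Q (D θ₀) < g Q E + C * δ := by
        have h1 := hgbound Q (D θ₀ - E)
        have h2 : |g Q (D θ₀ - E)| < C * δ := by
          refine lt_of_le_of_lt h1 ?_
          have s1 := mul_le_mul_of_nonneg_right
            (mul_le_mul_of_nonneg_left hQnorm hCpos.le) (norm_nonneg (D θ₀ - E))
          rw [mul_one] at s1
          have s2 := (mul_lt_mul_iff_right₀ hCpos).2 hEb
          linarith
        have h3 := (abs_le.1 h2.le).2
        rw [hsub1] at h3
        have h4 : g Q (D θ₀) - g Q E < C * δ := by
          have := (abs_lt.1 h2).2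
          rw [hsub1] at this
          linarith
        linarith
      have b2 : g Q E ≤ g Pstar E := hQmin Pstar hPstar
      have b3 : g Pstar E < g Pstar (D θ₀) + C * δ := by
        have h1 := hgbound Pstar (E - D θ₀)
        have h2 : |g Pstar (E - D θ₀)| < C * δ := by
          refine lt_of_le_of_lt h1 ?_
          have s1 := mul_le_mul_of_nonneg_right
            (mul_le_mul_of_nonneg_left hPsnorm hCpos.le) (norm_nonneg (E - D θ₀))
          rw [mul_one] at s1
          have s2 := (mul_lt_mul_iff_right₀ hCpos).2 hE
          linarith
        have h4 : g Pstar E - g Pstar (D θ₀) < C * δ := by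
          have := (abs_lt.1 h2).2
          rw [hsub1] at this
          linarith
        linarith
      have h2Cδ : 2 * C * δ = g Q₀ (D θ₀) - V (D θ₀) := by
        rw [hδdef]; field_simp
      have hge : g Q₀ (D θ₀) ≤ g Q (D θ₀) := hQ₀min hQK
      rw [hV0] at h2Cδ
      linarith
    · refine ⟨1, one_pos, fun E hE Q hQU hQmin => ?_⟩
      by_contra hfar
      push_neg at hfar
      exact hKne ⟨Q, hQU, le_of_lt hfar⟩
  -- the candidate derivative
  have hφex : ∃ φ : Matrix (Fin m) (Fin n) ℝ →L[ℝ] ℝ, ∀ E, φ E = g Pstar E := by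
    refine ⟨LinearMap.toContinuousLinearMap
      { toFun := fun E => g Pstar E
        map_add' := by
          intro x y
          simp [hgdef, Matrix.add_apply, mul_add, Finset.sum_add_distrib]
        map_smul' := by
          intro c x
          simp [hgdef, Matrix.smul_apply, smul_eq_mul, Finset.mul_sum, mul_left_comm] },
      fun E => rfl⟩
  obtain ⟨φ, hφ⟩ := hφex
  refine ⟨φ.comp (fderiv ℝ D θ₀), fun h => hφ _, ?_⟩
  set f : (Fin k → ℝ) →L[ℝ] ℝ := φ.comp (fderiv ℝ D θ₀) with hfdef
  -- φ ∘ D is differentiable with derivative f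
  have hAf : HasFDerivAt (fun θ => g Pstar (D θ)) f θ₀ := by
    have h1 : HasFDerivAt (fun θ => φ (D θ)) f θ₀ :=
      (φ.hasFDerivAt).comp θ₀ hD.hasFDerivAt
    exact h1.congr_of_eventuallyEq (Filter.Eventually.of_forall fun θ => (hφ (D θ)).symm)
  rw [hasFDerivAt_iff_isLittleO]
  have hA : (fun θ => g Pstar (D θ) - g Pstar (D θ₀) - f (θ - θ₀)) =o[nhds θ₀]
      (fun θ => θ - θ₀) := hAf.isLittleO
  have hBO : (fun θ => D θ - D θ₀) =O[nhds θ₀] (fun θ => θ - θ₀) :=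
    hD.hasFDerivAt.isBigO_sub
  -- the minimizer selection converges to Pstar
  have hsel : Tendsto (fun θ => ‖Psel θ - Pstar‖) (nhds θ₀) (nhds 0) := by
    rw [Metric.tendsto_nhds]
    intro ε hε
    obtain ⟨δ, hδpos, hδ⟩ := key (ε / 2) (by linarith)
    have hcont : ∀ᶠ θ in nhds θ₀, ‖D θ - D θ₀‖ < δ := by
      have := hD.continuousAt
      replace this := Metric.continuousAt_iff.1 this
      obtain ⟨δ', hδ'pos, hδ'⟩ := this δ hδpos
      filter_upwards [Metric.ball_mem_nhds θ₀ hδ'pos] with θ hθ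
      have := hδ' (Metric.mem_ball.1 hθ)
      rwa [dist_eq_norm] at this
    filter_upwards [hcont] with θ hθ
    have := hδ (D θ) hθ (Psel θ) (hPselU θ) (hPselMin θ)
    rw [Real.dist_eq, sub_zero, abs_of_nonneg (norm_nonneg _)]
    linarith
  -- second error term
  have hB : (fun θ => C * (‖Psel θ - Pstar‖ * ‖D θ - D θ₀‖)) =o[nhds θ₀]
      (fun θ => θ - θ₀) := by
    have h1 : (fun θ => ‖Psel θ - Pstar‖) =o[nhds θ₀] (fun _ => (1:ℝ)) :=
      (isLittleO_one_iff ℝ).2 hsel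
    have h2 : (fun θ => ‖D θ - D θ₀‖) =O[nhds θ₀] (fun θ => ‖θ - θ₀‖) :=
      hBO.norm_norm
    have h3 := h1.mul_isBigO h2
    simp only [one_mul] at h3
    exact (isLittleO_norm_right.1 h3).const_mul_left C
  have htotal : (fun θ => ‖g Pstar (D θ) - g Pstar (D θ₀) - f (θ - θ₀)‖
      + C * (‖Psel θ - Pstar‖ * ‖D θ - D θ₀‖)) =o[nhds θ₀] (fun θ => θ - θ₀) :=
    hA.norm_left.add hB
  refine IsBigO.trans_isLittleO ?_ htotal
  refine IsBigO.of_bound 1 (Eventually.of_forall fun θ => ?_)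
  rw [one_mul]
  set Aθ : ℝ := g Pstar (D θ) - g Pstar (D θ₀) - f (θ - θ₀) with hAθ
  set Bθ : ℝ := C * (‖Psel θ - Pstar‖ * ‖D θ - D θ₀‖) with hBθ
  have p1 : V (D θ) ≤ g Pstar (D θ) := hVle (D θ) Pstar hPstar
  have p3 : V (D θ) = g (Psel θ) (D θ) := hVP θ
  have p4 : V (D θ₀) ≤ g (Psel θ) (D θ₀) := hVle (D θ₀) (Psel θ) (hPselU θ)
  have p5 : g (Psel θ) (D θ - D θ₀) = g (Psel θ) (D θ) - g (Psel θ) (D θ₀) :=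
    hsub1 (Psel θ) (D θ) (D θ₀)
  have p6 : g (Psel θ - Pstar) (D θ - D θ₀)
      = g (Psel θ) (D θ - D θ₀) - g Pstar (D θ - D θ₀) :=
    hsub2 (Psel θ) Pstar (D θ - D θ₀)
  have p7 : |g (Psel θ - Pstar) (D θ - D θ₀)| ≤ Bθ := by
    refine (hgbound (Psel θ - Pstar) (D θ - D θ₀)).trans ?_
    rw [hBθ]; ring_nf; rfl
  have p8 : g Pstar (D θ - D θ₀) = g Pstar (D θ) - g Pstar (D θ₀) :=
    hsub1 Pstar (D θ) (D θ₀)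
  have p7' := abs_le.1 p7
  have hBθ0 : 0 ≤ Bθ := by
    rw [hBθ]
    exact mul_nonneg hCpos.le (mul_nonneg (norm_nonneg _) (norm_nonneg _))
  have habs : |V (D θ) - V (D θ₀) - f (θ - θ₀)| ≤ |Aθ| + Bθ := by
    rw [abs_le]
    constructor
    · linarith [p3, p4, p5, p6, p7'.1, p8, hAθ, neg_abs_le Aθ, hV0]
    · linarith [p1, le_abs_self Aθ, hBθ0, hAθ, hV0]
  calc ‖V (D θ) - V (D θ₀) - f (θ - θ₀)‖ = |V (D θ) - V (D θ₀) - f (θ - θ₀)| :=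
        Real.norm_eq_abs _
    _ ≤ |Aθ| + Bθ := habs
    _ = ‖Aθ‖ + Bθ := by rw [Real.norm_eq_abs]
    _ ≤ |‖Aθ‖ + Bθ| := le_abs_self _
    _ = ‖‖Aθ‖ + Bθ‖ := (Real.norm_eq_abs _).symm
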